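/- Let G be a finite abelian group and r ≥ 2 an integer. If η_{r−1}(G) ≤ D(G) + (r−1)·exp(G), then D_r(G) ≤ D(G) + (r−1)·exp(G). -/

import Mathlib

/-- `S` contains `r` pairwise disjoint nonempty zero-sum subsequences. -/
def HasDZS {G : Type*} [AddCommGroup G] (r : ℕ) (S : Multiset G) : Prop :=
  ∃ L : List (Multiset G), L.length = r ∧ (∀ T ∈ L, T ≠ 0 ∧ T.sum = 0) ∧ L.sum ≤ S

/-- The `r`-wise Davenport constant: the least `k > 0` such that every sequence of
length at least `k` over `G` has `r` pairwise disjoint nonempty zero-sum subsequences. -/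
noncomputable def DavR (G : Type*) [AddCommGroup G] (r : ℕ) : ℕ :=
  sInf {k | 0 < k ∧ ∀ S : Multiset G, k ≤ Multiset.card S → HasDZS r S}

/-- `S` contains `r` pairwise disjoint short (length at most `exp G`) nonempty
zero-sum subsequences. -/
def HasShortDZS {G : Type*} [AddCommGroup G] (r : ℕ) (S : Multiset G) : Prop :=
  ∃ L : List (Multiset G), L.length = r ∧
    (∀ T ∈ L, T ≠ 0 ∧ T.sum = 0 ∧ Multiset.card T ≤ AddMonoid.exponent G) ∧ L.sum ≤ S

/-- The generalized eta-invariant `η_r(G)`. -/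
noncomputable def EtaR (G : Type*) [AddCommGroup G] (r : ℕ) : ℕ :=
  sInf {k | 0 < k ∧ ∀ S : Multiset G, k ≤ Multiset.card S → HasShortDZS r S}


-- pigeonhole: some element has large multiplicity
lemma exists_high_count {G : Type*} [Fintype G] [DecidableEq G] [Inhabited G]
    (c : ℕ) (S : Multiset G) (hS : Fintype.card G * c + 1 ≤ Multiset.card S) :
    ∃ g : G, c ≤ S.count g := by
  by_contra hcon
  push_neg at hcon
  have h1 : ∀ g : G, S.count g ≤ c - 1 := fun g => Nat.le_sub_one_of_lt (hcon g)
  have h2 : Multiset.card S = ∑ g : G, S.count g :=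
    (Multiset.sum_count_eq_card (fun a _ => Finset.mem_univ a)).symm
  have h3 : ∑ g : G, S.count g ≤ Fintype.card G * (c - 1) := by
    calc ∑ g : G, S.count g ≤ Finset.univ.card • (c - 1) :=
          Finset.sum_le_card_nsmul _ _ _ (fun g _ => h1 g)
      _ = Fintype.card G * (c - 1) := by simp [Finset.card_univ]
  have hc : 0 < c := Nat.pos_of_ne_zero fun hc0 => by
    have := hcon default; omega
  have : Fintype.card G * (c-1) < Fintype.card G * c + 1 :=
    Nat.lt_succ_of_le (Nat.mul_le_mul_left _ (Nat.sub_le _ _))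
  omega

lemma card_list_sum {G : Type*} (L : List (Multiset G)) :
    Multiset.card L.sum = (L.map Multiset.card).sum := by
  induction L with
  | nil => simp
  | cons a l ih => simp [ih]

lemma short_exists (G : Type*) [AddCommGroup G] [Fintype G] (r' : ℕ) :
    ∃ k, 0 < k ∧ ∀ S : Multiset G, k ≤ Multiset.card S → HasShortDZS r' S := by
  classical
  haveI : Inhabited G := ⟨0⟩
  have he : AddMonoid.ExponentExists G := AddMonoid.ExponentExists.of_finite
  have hepos : 0 < AddMonoid.exponent G := he.exponent_pos
  set e := AddMonoid.exponent G with hedef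
  refine ⟨Fintype.card G * (r' * e) + 1, Nat.succ_pos _, fun S hS => ?_⟩
  obtain ⟨g, hg⟩ := exists_high_count (r' * e) S hS
  have hord : addOrderOf g ∣ e := AddMonoid.addOrder_dvd_exponent g
  have hordpos : 0 < addOrderOf g := addOrderOf_pos g
  refine ⟨List.replicate r' (Multiset.replicate (addOrderOf g) g), by simp, ?_, ?_⟩
  · intro T hT
    rw [List.mem_replicate] at hT
    rw [hT.2]
    refine ⟨?_, ?_, ?_⟩
    · intro h0
      have := congrArg Multiset.card h0
      simp only [Multiset.card_replicate, Multiset.card_zero] at this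
      omega
    · rw [Multiset.sum_replicate]; exact addOrderOf_nsmul_eq_zero g
    · simpa using Nat.le_of_dvd hepos hord
  · rw [List.sum_replicate, Multiset.nsmul_replicate]
    rw [← Multiset.le_count_iff_replicate_le]
    calc r' * addOrderOf g ≤ r' * e := Nat.mul_le_mul_left _ (Nat.le_of_dvd hepos hord)
      _ ≤ S.count g := hg

/-- If `η_{r-1}(G) ≤ D(G) + (r-1)·exp(G)` for an integer `r ≥ 2`, then
`D_r(G) ≤ D(G) + (r-1)·exp(G)`. -/
theorem stmt_6 (G : Type*) [AddCommGroup G] [Fintype G] (r : ℕ) (hr : 2 ≤ r)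
    (h : EtaR G (r - 1) ≤ DavR G 1 + (r - 1) * AddMonoid.exponent G) :
    DavR G r ≤ DavR G 1 + (r - 1) * AddMonoid.exponent G := by
  classical
  obtain ⟨k₀, hk₀pos, hk₀⟩ := short_exists G (r - 1)
  have hEtaNe : {k | 0 < k ∧ ∀ S : Multiset G, k ≤ Multiset.card S → HasShortDZS (r-1) S}.Nonempty :=
    ⟨k₀, hk₀pos, hk₀⟩
  have hEta := Nat.sInf_mem hEtaNe
  obtain ⟨hEtapos, hEtaProp⟩ := hEta
  obtain ⟨k₁, hk₁pos, hk₁⟩ := short_exists G 1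
  have hDNe : {k | 0 < k ∧ ∀ S : Multiset G, k ≤ Multiset.card S → HasDZS 1 S}.Nonempty := by
    refine ⟨k₁, hk₁pos, fun S hS => ?_⟩
    obtain ⟨L, hL1, hL2, hL3⟩ := hk₁ S hS
    exact ⟨L, hL1, fun T hT => ⟨(hL2 T hT).1, (hL2 T hT).2.1⟩, hL3⟩
  have hD := Nat.sInf_mem hDNe
  obtain ⟨hDpos, hDProp⟩ := hD
  set D := DavR G 1 with hDdef
  set e := AddMonoid.exponent G with hedef
  set K := D + (r - 1) * e with hKdef
  have hDpos' : 0 < D := hDpos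
  apply Nat.sInf_le
  refine ⟨by omega, fun S hS => ?_⟩
  -- get r-1 short disjoint zero-sum subsequences
  have hShort : HasShortDZS (r - 1) S := hEtaProp S (le_trans h hS)
  obtain ⟨L, hLlen, hLmem, hLsub⟩ := hShort
  -- card of L.sum ≤ (r-1)*e
  have hcard : Multiset.card L.sum ≤ (r - 1) * e := by
    rw [card_list_sum]
    calc (L.map Multiset.card).sum ≤ (L.map Multiset.card).length • e :=
          List.sum_le_card_nsmul _ _ (by
            intro x hx
            rw [List.mem_map] at hx
            obtain ⟨T, hT, rfl⟩ := hx
            exact (hLmem T hT).2.2)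
      _ = (r - 1) * e := by simp [hLlen]
  -- remaining sequence has card ≥ D
  set S' := S - L.sum with hS'def
  have hcardS' : D ≤ Multiset.card S' := by
    have := Multiset.card_le_card hLsub
    rw [hS'def, Multiset.card_sub hLsub]
    omega
  obtain ⟨L', hL'len, hL'mem, hL'sub⟩ := hDProp S' hcardS'
  refine ⟨L' ++ L, by simp [hL'len, hLlen]; omega, ?_, ?_⟩
  · intro T hT
    rw [List.mem_append] at hT
    rcases hT with hT | hT
    · exact hL'mem T hT
    · exact ⟨(hLmem T hT).1, (hLmem T hT).2.1⟩
  · rw [List.sum_append]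
    have : L'.sum + L.sum ≤ S' + L.sum := add_le_add hL'sub le_rfl
    rwa [hS'def, tsub_add_cancel_of_le hLsub] at this
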